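/- Let k ≥ 2 and let q_1 ≥ ... ≥ q_k and r_1 ≥ ... ≥ r_k be nonincreasing sequences of nonnegative reals. Define p_i' = q_i + r_{k−i+1}, and let p_1 ≥ ... ≥ p_k be the nonincreasing rearrangement of (p_1', ..., p_k'). Suppose there exist constants C₁, C₂ ≥ 0 with (1/i)·(∑_{j=1}^i q_j) − q_{i+1} ≤ C₁ and (1/i)·(∑_{j=1}^i r_j) − r_{i+1} ≤ C₂ for all i ∈ {1,...,k−1}. Then for all i ∈ {1,...,k−1}, (1/i)·(∑_{j=1}^i p_j) − p_{i+1} ≤ C₁ + C₂. -/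

import Mathlib

open Finset

noncomputable def nxt (Γ : Finset ℕ) (u : ℕ) : ℕ :=
  if h : (Γ.filter (fun v => u < v)).Nonempty then (Γ.filter (fun v => u < v)).min' h else 0

lemma nxt_eq_of_filter_singleton {Γ : Finset ℕ} {u b : ℕ}
    (h : Γ.filter (fun v => u < v) = {b}) : nxt Γ u = b := by
  rw [nxt, dif_pos (by rw [h]; exact ⟨b, mem_singleton_self b⟩)]
  simp [h]

lemma capsum (k : ℕ) (x : ℕ → ℝ) (C : ℝ) (hC : 0 ≤ C)
    (hmono : ∀ a b, 1 ≤ a → a ≤ b → b ≤ k → x b ≤ x a)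
    (hbal : ∀ n, 1 ≤ n → n + 1 ≤ k → ∑ j ∈ Finset.Icc 1 n, x j ≤ n * x (n+1) + n * C) :
    ∀ (Γ : Finset ℕ) (hne : Γ.Nonempty), Γ ⊆ Finset.Icc 1 k →
      ∑ u ∈ (Finset.Icc 1 (Γ.max' hne)) \ Γ, (x u - x (nxt Γ u))
        ≤ ((Γ.max' hne : ℝ) - Γ.card) * C := by
  intro Γ
  induction Γ using Finset.strongInduction with
  | _ Γ IH =>
  intro hne hsub
  set b := Γ.max' hne with hbdef
  have hbΓ : b ∈ Γ := Γ.max'_mem hne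
  have hbk : 1 ≤ b ∧ b ≤ k := by
    have := hsub hbΓ; simpa [Finset.mem_Icc] using this
  by_cases hΓ' : (Γ.erase b).Nonempty
  · -- inductive step
    set a := (Γ.erase b).max' hΓ' with hadef
    have haΓ' : a ∈ Γ.erase b := Finset.max'_mem _ hΓ'
    have haΓ : a ∈ Γ := Finset.mem_of_mem_erase haΓ'
    have hab : a < b := by
      have h1 : a ≤ b := Finset.le_max' Γ a haΓ
      have h2 : a ≠ b := Finset.ne_of_mem_erase haΓ'
      omega
    have hak : 1 ≤ a ∧ a ≤ k := by
      have := hsub haΓ; simpa [Finset.mem_Icc] using this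
    have hle_a : ∀ v ∈ Γ.erase b, v ≤ a := fun v hv => Finset.le_max' _ v hv
    have hsplit : (Finset.Icc 1 b) \ Γ = ((Finset.Icc 1 a) \ (Γ.erase b)) ∪ Finset.Ioo a b := by
      ext u
      simp only [Finset.mem_sdiff, Finset.mem_Icc, Finset.mem_union, Finset.mem_Ioo]
      constructor
      · rintro ⟨⟨h1, h2⟩, h3⟩
        by_cases h4 : u ≤ a
        · exact Or.inl ⟨⟨h1, h4⟩, fun hu => h3 (Finset.mem_of_mem_erase hu)⟩
        · have hub : u ≠ b := fun h => h3 (h ▸ hbΓ)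
          exact Or.inr ⟨by omega, by omega⟩
      · rintro (⟨⟨h1, h4⟩, h3⟩ | ⟨h4, h5⟩)
        · refine ⟨⟨h1, by omega⟩, fun hu => ?_⟩
          exact h3 (Finset.mem_erase.mpr ⟨by omega, hu⟩)
        · refine ⟨⟨by omega, by omega⟩, fun hu => ?_⟩
          have h6 : u ∈ Γ.erase b := Finset.mem_erase.mpr ⟨by omega, hu⟩
          have := hle_a u h6
          omega
    have hdisj : Disjoint ((Finset.Icc 1 a) \ (Γ.erase b)) (Finset.Ioo a b) := by
      rw [Finset.disjoint_left]
      intro u hu hu'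
      simp only [Finset.mem_sdiff, Finset.mem_Icc] at hu
      simp only [Finset.mem_Ioo] at hu'
      omega
    have hnxt2 : ∀ u ∈ Finset.Ioo a b, x u - x (nxt Γ u) = x u - x b := by
      intro u hu
      simp only [Finset.mem_Ioo] at hu
      have hfil : Γ.filter (fun v => u < v) = {b} := by
        ext v
        simp only [Finset.mem_filter, Finset.mem_singleton]
        constructor
        · rintro ⟨hv, hv2⟩
          by_contra hvb
          have h6 : v ∈ Γ.erase b := Finset.mem_erase.mpr ⟨hvb, hv⟩
          have := hle_a v h6; omega
        · rintro rfl; exact ⟨hbΓ, hu.2⟩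
      rw [nxt_eq_of_filter_singleton hfil]
    have hnxt1 : ∀ u ∈ (Finset.Icc 1 a) \ (Γ.erase b),
        x u - x (nxt Γ u) = x u - x (nxt (Γ.erase b) u) := by
      intro u hu
      simp only [Finset.mem_sdiff, Finset.mem_Icc] at hu
      have hua : u < a := by
        rcases hu with ⟨⟨h1, h2⟩, h3⟩
        by_contra h
        have h5 : u = a := by omega
        exact h3 (h5 ▸ haΓ')
      have hne1 : (Γ.filter (fun v => u < v)).Nonempty :=
        ⟨b, Finset.mem_filter.mpr ⟨hbΓ, by omega⟩⟩
      have hne2 : ((Γ.erase b).filter (fun v => u < v)).Nonempty :=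
        ⟨a, Finset.mem_filter.mpr ⟨haΓ', hua⟩⟩
      have heq : nxt Γ u = nxt (Γ.erase b) u := by
        rw [nxt, dif_pos hne1, nxt, dif_pos hne2]
        apply le_antisymm
        · apply Finset.min'_le
          have hmem := Finset.min'_mem _ hne2
          simp only [Finset.mem_filter] at hmem ⊢
          exact ⟨Finset.mem_of_mem_erase hmem.1, hmem.2⟩
        · apply Finset.min'_le
          have hmem := Finset.min'_mem _ hne1
          have hmin_le_a : (Γ.filter (fun v => u < v)).min' hne1 ≤ a :=
            Finset.min'_le _ a (Finset.mem_filter.mpr ⟨haΓ, hua⟩)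
          simp only [Finset.mem_filter] at hmem ⊢
          exact ⟨Finset.mem_erase.mpr ⟨by omega, hmem.1⟩, hmem.2⟩
      rw [heq]
    rw [hsplit, Finset.sum_union hdisj, Finset.sum_congr rfl hnxt1, Finset.sum_congr rfl hnxt2]
    have hIH := IH (Γ.erase b) (Finset.erase_ssubset hbΓ) hΓ'
      (fun v hv => hsub (Finset.mem_of_mem_erase hv))
    rw [← hadef] at hIH
    have hcard' : (Γ.erase b).card = Γ.card - 1 := Finset.card_erase_of_mem hbΓ
    have hcardpos : 1 ≤ Γ.card := Finset.card_pos.mpr hne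
    have hcard2 : 2 ≤ Γ.card := by
      have := Finset.card_pos.mpr hΓ'
      omega
    have hacard : (Γ.erase b).card ≤ a := by
      have hss : Γ.erase b ⊆ Finset.Icc 1 a := by
        intro v hv
        have h1 := hle_a v hv
        have h2 := hsub (Finset.mem_of_mem_erase hv)
        simp only [Finset.mem_Icc] at h2 ⊢
        omega
      calc (Γ.erase b).card ≤ (Finset.Icc 1 a).card := Finset.card_le_card hss
        _ = a := by rw [Nat.card_Icc]; omega
    -- real-valued abbreviations
    set A1 : ℝ := ∑ u ∈ (Finset.Icc 1 a) \ (Γ.erase b), (x u - x (nxt (Γ.erase b) u)) with hA1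
    set W : ℝ := ∑ u ∈ Finset.Ioo a b, (x u - x b) with hW
    have hdelta : 0 ≤ x a - x b := by
      have := hmono a b hak.1 (le_of_lt hab) hbk.2
      linarith
    have hWb : W ≤ ((b:ℝ) - a - 1) * (x a - x b) := by
      have hterm : ∀ u ∈ Finset.Ioo a b, x u - x b ≤ x a - x b := by
        intro u hu
        simp only [Finset.mem_Ioo] at hu
        have : x u ≤ x a := hmono a u hak.1 (by omega) (by omega)
        linarith
      calc W ≤ ∑ _u ∈ Finset.Ioo a b, (x a - x b) := Finset.sum_le_sum hterm
        _ = ((b - a - 1 : ℕ):ℝ) * (x a - x b) := by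
            rw [Finset.sum_const, Nat.card_Ioo, nsmul_eq_mul]
        _ = ((b:ℝ) - a - 1) * (x a - x b) := by
            rw [Nat.cast_sub (show 1 ≤ b - a by omega), Nat.cast_sub (show a ≤ b by omega),
              Nat.cast_one]
    have hA1X : A1 ≤ (∑ u ∈ Finset.Icc 1 a, x u) - (a:ℝ) * x a := by
      have step1 : A1 ≤ ∑ u ∈ (Finset.Icc 1 a) \ (Γ.erase b), (x u - x a) := by
        apply Finset.sum_le_sum
        intro u hu
        simp only [Finset.mem_sdiff, Finset.mem_Icc] at hu
        have hua : u < a := by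
          by_contra h
          have h5 : u = a := by omega
          exact hu.2 (h5 ▸ haΓ')
        have hne2 : ((Γ.erase b).filter (fun v => u < v)).Nonempty :=
          ⟨a, Finset.mem_filter.mpr ⟨haΓ', hua⟩⟩
        have hwmem : nxt (Γ.erase b) u ∈ Γ.erase b := by
          rw [nxt, dif_pos hne2]
          exact Finset.mem_of_mem_filter _ (Finset.min'_mem _ hne2)
        have h1 : 1 ≤ nxt (Γ.erase b) u := by
          have := hsub (Finset.mem_of_mem_erase hwmem)
          simp only [Finset.mem_Icc] at this; omega
        have h2 : nxt (Γ.erase b) u ≤ a := hle_a _ hwmem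
        have : x a ≤ x (nxt (Γ.erase b) u) := hmono _ a h1 h2 hak.2
        linarith
      have step2 : ∑ u ∈ (Finset.Icc 1 a) \ (Γ.erase b), (x u - x a)
          ≤ ∑ u ∈ Finset.Icc 1 a, (x u - x a) := by
        apply Finset.sum_le_sum_of_subset_of_nonneg Finset.sdiff_subset
        intro u hu _
        simp only [Finset.mem_Icc] at hu
        have : x a ≤ x u := hmono u a hu.1 hu.2 hak.2
        linarith
      have step3 : ∑ u ∈ Finset.Icc 1 a, (x u - x a)
          = (∑ u ∈ Finset.Icc 1 a, x u) - (a:ℝ) * x a := by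
        rw [Finset.sum_sub_distrib, Finset.sum_const, Nat.card_Icc, Nat.add_sub_cancel,
          nsmul_eq_mul]
      linarith
    have hsplit2 : Finset.Icc 1 (b-1) = Finset.Icc 1 a ∪ Finset.Ioo a b := by
      ext u
      simp only [Finset.mem_Icc, Finset.mem_union, Finset.mem_Ioo]
      omega
    have hdisj2 : Disjoint (Finset.Icc 1 a) (Finset.Ioo a b) := by
      rw [Finset.disjoint_left]
      intro u hu hu'
      simp only [Finset.mem_Icc] at hu
      simp only [Finset.mem_Ioo] at hu'
      omega
    have hbal' := hbal (b-1) (by omega) (by omega)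
    rw [show b - 1 + 1 = b by omega, hsplit2, Finset.sum_union hdisj2] at hbal'
    have hcastb : ((b-1:ℕ):ℝ) = (b:ℝ) - 1 := by
      rw [Nat.cast_sub (by omega), Nat.cast_one]
    rw [hcastb] at hbal'
    have hWx : ∑ u ∈ Finset.Ioo a b, x u = W + ((b:ℝ) - a - 1) * x b := by
      rw [hW, Finset.sum_sub_distrib, Finset.sum_const, Nat.card_Ioo, nsmul_eq_mul,
        Nat.cast_sub (show 1 ≤ b - a by omega), Nat.cast_sub (show a ≤ b by omega),
        Nat.cast_one]
      ring
    rw [hWx] at hbal'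
    -- the two key bounds
    have hcast1 : (((Γ.erase b).card : ℕ):ℝ) = (Γ.card : ℝ) - 1 := by
      rw [hcard', Nat.cast_sub hcardpos, Nat.cast_one]
    have h1 : A1 + W ≤ ((a:ℝ) - Γ.card + 1) * C + ((b:ℝ) - a - 1) * (x a - x b) := by
      have := hIH
      rw [hcast1] at this
      have e : ((a:ℝ) - ((Γ.card:ℝ) - 1)) = ((a:ℝ) - Γ.card + 1) := by ring
      rw [e] at this
      linarith
    have h2 : A1 + W ≤ ((b:ℝ) - 1) * C - (a:ℝ) * (x a - x b) := by
      nlinarith [hA1X, hbal']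
    have haR0 : (0:ℝ) ≤ (a:ℝ) := Nat.cast_nonneg a
    have habR : (a:ℝ) + 1 ≤ (b:ℝ) := by exact_mod_cast hab
    have hasR : (Γ.card:ℝ) - 1 ≤ (a:ℝ) := by
      rw [← hcast1]; exact_mod_cast hacard
    have hbpos : (0:ℝ) < (b:ℝ) - 1 := by
      have : (2:ℝ) ≤ (b:ℝ) := by exact_mod_cast (show 2 ≤ b by omega)
      linarith
    have e1 : (a:ℝ) * (A1 + W)
        ≤ (a:ℝ) * (((a:ℝ) - Γ.card + 1) * C + ((b:ℝ) - a - 1) * (x a - x b)) :=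
      mul_le_mul_of_nonneg_left h1 haR0
    have e2 : ((b:ℝ) - 1 - a) * (A1 + W)
        ≤ ((b:ℝ) - 1 - a) * (((b:ℝ) - 1) * C - (a:ℝ) * (x a - x b)) :=
      mul_le_mul_of_nonneg_left h2 (by linarith)
    have e3 : (0:ℝ) ≤ ((b:ℝ) - 1 - a) * ((a:ℝ) - Γ.card + 1) * C :=
      mul_nonneg (mul_nonneg (by linarith) (by linarith)) hC
    have key : ((b:ℝ) - 1) * (A1 + W) ≤ ((b:ℝ) - 1) * (((b:ℝ) - Γ.card) * C) := by
      nlinarith [e1, e2, e3]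
    exact le_of_mul_le_mul_left key hbpos
  · -- base case : Γ = {b}
    have hsingle : ∀ v ∈ Γ, v = b := by
      intro v hv
      by_contra hvb
      exact hΓ' ⟨v, Finset.mem_erase.mpr ⟨hvb, hv⟩⟩
    have hcard : Γ.card = 1 := by
      rw [Finset.card_eq_one]
      exact ⟨b, Finset.eq_singleton_iff_unique_mem.mpr ⟨hbΓ, hsingle⟩⟩
    have hset : (Finset.Icc 1 b) \ Γ = Finset.Icc 1 (b-1) := by
      ext u
      simp only [Finset.mem_sdiff, Finset.mem_Icc]
      constructor
      · rintro ⟨⟨h1, h2⟩, h3⟩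
        have : u ≠ b := fun h => h3 (h ▸ hbΓ)
        omega
      · rintro ⟨h1, h2⟩
        refine ⟨⟨h1, by omega⟩, fun hu => ?_⟩
        have := hsingle u hu; omega
    have hnxtb : ∀ u ∈ Finset.Icc 1 (b-1), x u - x (nxt Γ u) = x u - x b := by
      intro u hu
      simp only [Finset.mem_Icc] at hu
      have hfil : Γ.filter (fun v => u < v) = {b} := by
        ext v
        simp only [Finset.mem_filter, Finset.mem_singleton]
        constructor
        · rintro ⟨hv, _⟩; exact hsingle v hv
        · rintro rfl; exact ⟨hbΓ, by omega⟩
      rw [nxt_eq_of_filter_singleton hfil]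
    rw [hset, Finset.sum_congr rfl hnxtb, hcard]
    rcases Nat.eq_or_lt_of_le hbk.1 with hb1 | hb2
    · rw [← hb1]
      simp
    · have hbal' := hbal (b-1) (by omega) (by omega)
      rw [show b - 1 + 1 = b by omega] at hbal'
      have hcastb : ((b-1:ℕ):ℝ) = (b:ℝ) - 1 := by
        rw [Nat.cast_sub (by omega), Nat.cast_one]
      rw [hcastb] at hbal'
      rw [Finset.sum_sub_distrib, Finset.sum_const, Nat.card_Icc,
        show b - 1 + 1 - 1 = b - 1 by omega, nsmul_eq_mul, hcastb]
      push_cast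
      linarith

set_option maxHeartbeats 2000000 in
theorem series_composition_balanced (k : ℕ) (hk : 2 ≤ k) (q r p : ℕ → ℝ)
    (hq0 : ∀ i ∈ Finset.Icc 1 k, 0 ≤ q i)
    (hr0 : ∀ i ∈ Finset.Icc 1 k, 0 ≤ r i)
    (hqmono : ∀ i j, 1 ≤ i → i ≤ j → j ≤ k → q j ≤ q i)
    (hrmono : ∀ i j, 1 ≤ i → i ≤ j → j ≤ k → r j ≤ r i)
    (hpmono : ∀ i j, 1 ≤ i → i ≤ j → j ≤ k → p j ≤ p i)
    (σ : ℕ → ℕ)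
    (hbij : Set.BijOn σ (Finset.Icc 1 k : Set ℕ) (Finset.Icc 1 k : Set ℕ))
    (hperm : ∀ i ∈ Finset.Icc 1 k, p i = q (σ i) + r (k - σ i + 1))
    (C₁ C₂ : ℝ) (hC₁ : 0 ≤ C₁) (hC₂ : 0 ≤ C₂)
    (hbq : ∀ i ∈ Finset.Icc 1 (k - 1),
      (1 / (i : ℝ)) * (∑ j ∈ Finset.Icc 1 i, q j) - q (i + 1) ≤ C₁)
    (hbr : ∀ i ∈ Finset.Icc 1 (k - 1),
      (1 / (i : ℝ)) * (∑ j ∈ Finset.Icc 1 i, r j) - r (i + 1) ≤ C₂) :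
    ∀ i ∈ Finset.Icc 1 (k - 1),
      (1 / (i : ℝ)) * (∑ j ∈ Finset.Icc 1 i, p j) - p (i + 1) ≤ C₁ + C₂ := by
  intro i hi
  rw [Finset.mem_Icc] at hi
  obtain ⟨hi1, hi2⟩ := hi
  have hik : i + 1 ≤ k := by omega
  set y := p (i+1) with hy
  -- balance in multiplied form
  have hbalq : ∀ n, 1 ≤ n → n + 1 ≤ k →
      ∑ j ∈ Finset.Icc 1 n, q j ≤ n * q (n+1) + n * C₁ := by
    intro n h1 h2
    have h := hbq n (Finset.mem_Icc.mpr ⟨h1, by omega⟩)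
    have hn0 : (0:ℝ) < (n:ℝ) := by
      have : (1:ℝ) ≤ (n:ℝ) := by exact_mod_cast h1
      linarith
    have h3 := mul_le_mul_of_nonneg_left h (le_of_lt hn0)
    rw [mul_sub, ← mul_assoc, mul_one_div_cancel (ne_of_gt hn0), one_mul] at h3
    linarith
  have hbalr : ∀ n, 1 ≤ n → n + 1 ≤ k →
      ∑ j ∈ Finset.Icc 1 n, r j ≤ n * r (n+1) + n * C₂ := by
    intro n h1 h2
    have h := hbr n (Finset.mem_Icc.mpr ⟨h1, by omega⟩)
    have hn0 : (0:ℝ) < (n:ℝ) := by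
      have : (1:ℝ) ≤ (n:ℝ) := by exact_mod_cast h1
      linarith
    have h3 := mul_le_mul_of_nonneg_left h (le_of_lt hn0)
    rw [mul_sub, ← mul_assoc, mul_one_div_cancel (ne_of_gt hn0), one_mul] at h3
    linarith
  set S : Finset ℕ := (Finset.Icc 1 i).image σ with hS
  have hinj : Set.InjOn σ (Finset.Icc 1 k : Set ℕ) := hbij.injOn
  have hsubcoe : (Finset.Icc 1 i : Set ℕ) ⊆ (Finset.Icc 1 k : Set ℕ) := by
    intro t ht
    simp only [Finset.coe_Icc, Set.mem_Icc] at ht ⊢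
    omega
  have hScard : S.card = i := by
    rw [hS, Finset.card_image_of_injOn (hinj.mono hsubcoe), Nat.card_Icc]
    omega
  have hSsub : S ⊆ Finset.Icc 1 k := by
    intro t ht
    rw [hS, Finset.mem_image] at ht
    obtain ⟨j, hj, rfl⟩ := ht
    have hjk : (j:ℕ) ∈ (Finset.Icc 1 k : Set ℕ) := by
      simp only [Finset.coe_Icc, Set.mem_Icc]
      simp only [Finset.mem_Icc] at hj
      omega
    have := hbij.mapsTo hjk
    simpa [Finset.coe_Icc, Set.mem_Icc, Finset.mem_Icc] using this
  set Tc : Finset ℕ := Finset.Icc 1 k \ S with hTc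
  have hTccard : Tc.card = k - i := by
    rw [hTc, Finset.card_sdiff_of_subset hSsub, Nat.card_Icc, hScard]
    omega
  have hTcne : Tc.Nonempty := by
    rw [← Finset.card_pos, hTccard]; omega
  set c1 := Tc.min' hTcne with hc1
  have hc1mem : c1 ∈ Tc := Finset.min'_mem _ _
  have hc1k : 1 ≤ c1 ∧ c1 ≤ k := by
    have := (Finset.mem_sdiff.mp hc1mem).1
    simpa [Finset.mem_Icc] using this
  have hc1S : c1 ∉ S := (Finset.mem_sdiff.mp hc1mem).2
  have hcap : ∀ t ∈ Tc, q t + r (k - t + 1) ≤ y := by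
    intro t ht
    rw [Finset.mem_sdiff] at ht
    obtain ⟨htk, htS⟩ := ht
    have htk' : (t : ℕ) ∈ (Finset.Icc 1 k : Set ℕ) := by
      simp only [Finset.coe_Icc, Set.mem_Icc]
      simpa [Finset.mem_Icc] using htk
    obtain ⟨j, hj, hjt⟩ := hbij.surjOn htk'
    have hjIcc : 1 ≤ j ∧ j ≤ k := by
      simpa [Finset.coe_Icc, Set.mem_Icc] using hj
    have hji : ¬ (j ≤ i) := by
      intro hji
      apply htS
      rw [hS, Finset.mem_image]
      exact ⟨j, Finset.mem_Icc.mpr ⟨hjIcc.1, hji⟩, hjt⟩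
    have hp := hperm j (Finset.mem_Icc.mpr hjIcc)
    rw [hjt] at hp
    rw [← hp, hy]
    exact hpmono (i+1) j (by omega) (by omega) hjIcc.2
  have key1 : ∑ t ∈ S, (q t + r (k - t + 1)) = ∑ j ∈ Finset.Icc 1 i, p j := by
    rw [hS, Finset.sum_image]
    · apply Finset.sum_congr rfl
      intro j hj
      simp only [Finset.mem_Icc] at hj
      exact (hperm j (Finset.mem_Icc.mpr ⟨hj.1, by omega⟩)).symm
    · intro a ha b hb hab
      apply hinj _ _ hab
      · simp only [Finset.coe_Icc, Set.mem_Icc]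
        simp only [Finset.mem_coe, Finset.mem_Icc] at ha
        omega
      · simp only [Finset.coe_Icc, Set.mem_Icc]
        simp only [Finset.mem_coe, Finset.mem_Icc] at hb
        omega
  have hSsplit : S = (Finset.Icc 1 (c1 - 1)) ∪ S.filter (fun t => c1 < t) := by
    ext t
    simp only [Finset.mem_union, Finset.mem_Icc, Finset.mem_filter]
    constructor
    · intro ht
      rcases Nat.lt_or_ge t c1 with h | h
      · left
        have htk := hSsub ht
        simp only [Finset.mem_Icc] at htk
        exact ⟨htk.1, by omega⟩
      · right
        have : t ≠ c1 := fun h' => hc1S (h' ▸ ht)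
        exact ⟨ht, by omega⟩
    · rintro (⟨h1, h2⟩ | ⟨h1, _⟩)
      · by_contra htS
        have htTc : t ∈ Tc := by
          rw [hTc, Finset.mem_sdiff]
          exact ⟨Finset.mem_Icc.mpr ⟨h1, by omega⟩, htS⟩
        have := Finset.min'_le Tc t htTc
        omega
      · exact h1
  have hdisjS : Disjoint (Finset.Icc 1 (c1-1)) (S.filter (fun t => c1 < t)) := by
    rw [Finset.disjoint_left]
    intro t h1 h2
    simp only [Finset.mem_Icc] at h1
    simp only [Finset.mem_filter] at h2
    omega
  have hcard1 : c1 - 1 ≤ i := by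
    have hss : Finset.Icc 1 (c1-1) ⊆ S := by
      intro t ht
      rw [hSsplit]
      exact Finset.mem_union_left _ ht
    have := Finset.card_le_card hss
    rw [Nat.card_Icc, hScard] at this
    omega
  have hpart1 : ∑ t ∈ Finset.Icc 1 (c1-1), (q t + r (k - t + 1) - y) ≤ (i:ℝ) * C₁ := by
    have hsub1 : ∀ t ∈ Finset.Icc 1 (c1-1), q t + r (k - t + 1) - y ≤ q t - q c1 := by
      intro t ht
      simp only [Finset.mem_Icc] at ht
      have hr : r (k - t + 1) ≤ r (k - c1 + 1) :=
        hrmono (k - c1 + 1) (k - t + 1) (by omega) (by omega) (by omega)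
      have hcapc1 := hcap c1 hc1mem
      linarith
    calc ∑ t ∈ Finset.Icc 1 (c1-1), (q t + r (k-t+1) - y)
        ≤ ∑ t ∈ Finset.Icc 1 (c1-1), (q t - q c1) := Finset.sum_le_sum hsub1
      _ ≤ (i:ℝ) * C₁ := by
          rcases Nat.eq_or_lt_of_le hc1k.1 with h1 | h2
          · rw [← h1]
            simp only [show (1:ℕ) - 1 = 0 from rfl]
            rw [show Finset.Icc 1 0 = (∅ : Finset ℕ) from rfl, Finset.sum_empty]
            exact mul_nonneg (Nat.cast_nonneg i) hC₁
          · have hb := hbalq (c1-1) (by omega) (by omega)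
            rw [show c1 - 1 + 1 = c1 by omega] at hb
            rw [Finset.sum_sub_distrib, Finset.sum_const, Nat.card_Icc,
              show c1 - 1 + 1 - 1 = c1 - 1 by omega, nsmul_eq_mul]
            have hcast : ((c1-1:ℕ):ℝ) = (c1:ℝ) - 1 := by
              rw [Nat.cast_sub (by omega), Nat.cast_one]
            have hcile : (c1:ℝ) - 1 ≤ (i:ℝ) := by
              have h3 : ((c1-1:ℕ):ℝ) ≤ (i:ℝ) := by exact_mod_cast hcard1
              rw [hcast] at h3; exact h3
            rw [hcast] at hb ⊢
            nlinarith [hC₁]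
  set Γ : Finset ℕ := Tc.image (fun c => k - c + 1) with hΓ
  have hΓsub : Γ ⊆ Finset.Icc 1 k := by
    intro u hu
    rw [hΓ, Finset.mem_image] at hu
    obtain ⟨c, hc, rfl⟩ := hu
    have := (Finset.mem_sdiff.mp hc).1
    simp only [Finset.mem_Icc] at this ⊢
    omega
  have hΓne : Γ.Nonempty := hTcne.image _
  have hΓcard : Γ.card = k - i := by
    rw [hΓ, Finset.card_image_of_injOn, hTccard]
    intro c hc c' hc' h
    have h1 : 1 ≤ c ∧ c ≤ k := by
      have := (Finset.mem_sdiff.mp (Finset.mem_coe.mp hc)).1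
      simpa [Finset.mem_Icc] using this
    have h2 : 1 ≤ c' ∧ c' ≤ k := by
      have := (Finset.mem_sdiff.mp (Finset.mem_coe.mp hc')).1
      simpa [Finset.mem_Icc] using this
    simp only at h
    omega
  set g := Γ.max' hΓne with hg
  have hgk : 1 ≤ g ∧ g ≤ k := by
    have h := hΓsub (Γ.max'_mem hΓne)
    rw [Finset.mem_Icc] at h
    exact h
  have hgval : g = k - c1 + 1 := by
    apply le_antisymm
    · have hmem : g ∈ Tc.image (fun c => k - c + 1) := by
        rw [← hΓ]; exact Γ.max'_mem hΓne
      obtain ⟨c, hc, hcg⟩ := Finset.mem_image.mp hmem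
      have hcge : c1 ≤ c := Finset.min'_le _ _ hc
      have hck : 1 ≤ c ∧ c ≤ k := by
        have := (Finset.mem_sdiff.mp hc).1
        simpa [Finset.mem_Icc] using this
      have hcg' : k - c + 1 = g := hcg
      omega
    · apply Finset.le_max'
      rw [hΓ, Finset.mem_image]
      exact ⟨c1, hc1mem, rfl⟩
  have hcapsum := capsum k r C₂ hC₂ (fun a b h1 h2 h3 => hrmono a b h1 h2 h3) hbalr Γ hΓne hΓsub
  rw [← hg] at hcapsum
  have himg : (S.filter (fun t => c1 < t)).image (fun t => k - t + 1)
      = Finset.Icc 1 g \ Γ := by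
    ext u
    simp only [Finset.mem_image, Finset.mem_filter, Finset.mem_sdiff, Finset.mem_Icc]
    constructor
    · rintro ⟨t, ⟨htS, htc1⟩, rfl⟩
      have htk := hSsub htS
      simp only [Finset.mem_Icc] at htk
      refine ⟨⟨by omega, by omega⟩, ?_⟩
      intro hu
      rw [hΓ, Finset.mem_image] at hu
      obtain ⟨c, hcTc, hceq⟩ := hu
      have hck : 1 ≤ c ∧ c ≤ k := by
        have := (Finset.mem_sdiff.mp hcTc).1
        simpa [Finset.mem_Icc] using this
      have hceq' : k - c + 1 = k - t + 1 := hceq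
      have hct : c = t := by omega
      exact (Finset.mem_sdiff.mp hcTc).2 (hct ▸ htS)
    · rintro ⟨⟨hu1, hu2⟩, huΓ⟩
      have hug : u ≠ g := fun h => huΓ (h ▸ Γ.max'_mem hΓne)
      have htmem : k - u + 1 ∈ S := by
        have hin : k - u + 1 ∈ Finset.Icc 1 k := Finset.mem_Icc.mpr ⟨by omega, by omega⟩
        by_contra hns
        have : k - u + 1 ∈ Tc := by
          rw [hTc, Finset.mem_sdiff]; exact ⟨hin, hns⟩
        apply huΓ
        rw [hΓ, Finset.mem_image]
        exact ⟨k - u + 1, this, by omega⟩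
      exact ⟨k - u + 1, ⟨htmem, by omega⟩, by omega⟩
  have hpart2 : ∑ t ∈ S.filter (fun t => c1 < t), (q t + r (k - t + 1) - y)
      ≤ ((g:ℝ) - Γ.card) * C₂ := by
    have hinj2 : ∀ t ∈ S.filter (fun t => c1 < t), ∀ t' ∈ S.filter (fun t => c1 < t),
        k - t + 1 = k - t' + 1 → t = t' := by
      intro t ht t' ht' h
      have h1 := hSsub (Finset.mem_filter.mp ht).1
      have h2 := hSsub (Finset.mem_filter.mp ht').1
      simp only [Finset.mem_Icc] at h1 h2
      omega
    have hrw : ∑ u ∈ Finset.Icc 1 g \ Γ, (r u - r (nxt Γ u))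
        = ∑ t ∈ S.filter (fun t => c1 < t), (r (k - t + 1) - r (nxt Γ (k - t + 1))) := by
      rw [← himg, Finset.sum_image hinj2]
    have hterm : ∀ t ∈ S.filter (fun t => c1 < t),
        q t + r (k - t + 1) - y ≤ r (k - t + 1) - r (nxt Γ (k - t + 1)) := by
      intro t ht
      rw [Finset.mem_filter] at ht
      obtain ⟨htS, htc1⟩ := ht
      have htk := hSsub htS
      rw [Finset.mem_Icc] at htk
      have hug : k - t + 1 < g := by omega
      have hfilne : (Γ.filter (fun v => k - t + 1 < v)).Nonempty :=
        ⟨g, Finset.mem_filter.mpr ⟨Γ.max'_mem hΓne, hug⟩⟩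
      have hwmem : nxt Γ (k - t + 1) ∈ Γ ∧ k - t + 1 < nxt Γ (k - t + 1) := by
        rw [nxt, dif_pos hfilne]
        have := Finset.min'_mem _ hfilne
        simpa [Finset.mem_filter] using this
      obtain ⟨c, hcTc, hceq⟩ := by
        have := hwmem.1
        rw [hΓ, Finset.mem_image] at this
        exact this
      have hceq' : k - c + 1 = nxt Γ (k - t + 1) := hceq
      have hck : 1 ≤ c ∧ c ≤ k := by
        have := (Finset.mem_sdiff.mp hcTc).1
        simpa [Finset.mem_Icc] using this
      have hct : c < t := by
        have := hwmem.2
        omega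
      have hq : q t ≤ q c := hqmono c t hck.1 (by omega) htk.2
      have hcapc := hcap c hcTc
      have hrww : r (k - c + 1) = r (nxt Γ (k - t + 1)) := by rw [hceq']
      rw [hrww] at hcapc
      linarith
    calc ∑ t ∈ S.filter (fun t => c1 < t), (q t + r (k - t + 1) - y)
        ≤ ∑ t ∈ S.filter (fun t => c1 < t), (r (k - t + 1) - r (nxt Γ (k - t + 1))) :=
          Finset.sum_le_sum hterm
      _ = ∑ u ∈ Finset.Icc 1 g \ Γ, (r u - r (nxt Γ u)) := hrw.symm
      _ ≤ ((g:ℝ) - Γ.card) * C₂ := hcapsum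
  have hgle : ((g:ℝ) - (Γ.card:ℝ)) ≤ (i:ℝ) := by
    rw [hΓcard, hgval]
    have h1 : ((k - c1 + 1 : ℕ):ℝ) = (k:ℝ) - c1 + 1 := by
      rw [Nat.cast_add, Nat.cast_sub hc1k.2, Nat.cast_one]
    have h2 : ((k - i : ℕ):ℝ) = (k:ℝ) - i := by
      rw [Nat.cast_sub (by omega)]
    rw [h1, h2]
    have : (1:ℝ) ≤ (c1:ℝ) := by exact_mod_cast hc1k.1
    linarith
  have hp2 : ∑ t ∈ S.filter (fun t => c1 < t), (q t + r (k - t + 1) - y) ≤ (i:ℝ) * C₂ := by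
    have := mul_le_mul_of_nonneg_right hgle hC₂
    linarith
  have htot : ∑ t ∈ S, (q t + r (k - t + 1) - y) ≤ (i:ℝ) * C₁ + (i:ℝ) * C₂ := by
    rw [hSsplit, Finset.sum_union hdisjS]
    have hp1 : ∑ t ∈ Finset.Icc 1 (c1-1), (q t + r (k - t + 1) - y) ≤ (i:ℝ) * C₁ := hpart1
    have hp2' : ∑ t ∈ (S.filter (fun t => c1 < t)) \ Finset.Icc 1 (c1-1) , (0:ℝ) = 0 :=
      Finset.sum_const_zero
    -- note: after rw [hSsplit], the filter is over the union; need care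
    linarith [hp1, hp2]
  have hipos : (0:ℝ) < (i:ℝ) := by
    have : (1:ℝ) ≤ (i:ℝ) := by exact_mod_cast hi1
    linarith
  have hsplitsum : ∑ t ∈ S, (q t + r (k - t + 1) - y)
      = (∑ t ∈ S, (q t + r (k - t + 1))) - (i:ℝ) * y := by
    rw [Finset.sum_sub_distrib, Finset.sum_const, hScard, nsmul_eq_mul]
  have hfin : ∑ j ∈ Finset.Icc 1 i, p j ≤ (i:ℝ) * (C₁ + C₂ + y) := by
    rw [← key1]
    nlinarith [htot, hsplitsum]
  rw [sub_le_iff_le_add, one_div_mul_eq_div, div_le_iff₀ hipos]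
  nlinarith [hfin]
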